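/- Let P be an orthogonal projection with 2×2 matrix (x a; a* y) relative to H = H₊ ⊕ H₋. Then the kernel of a equals the orthogonal direct sum of the kernel of y and the kernel of y - 1, i.e., N(a) = N(y) ⊕ N(y - 1). -/

import Mathlib

/-- For an orthogonal projection `P` with block matrix `(x a; a* y)` relative to
`H = H₊ ⊕ H₋` (given by the projection `E`), the kernel of `a = E P (1-E)` is the
(orthogonal) direct sum of the kernel of `y = (1-E) P (1-E)` and the kernel of `y - 1`. -/
theorem stmt2 {H : Type*} [NormedAddCommGroup H] [InnerProductSpace ℂ H] [CompleteSpace H]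
    (P E : H →L[ℂ] H) (hP : IsSelfAdjoint P) (hP2 : P * P = P)
    (hE : IsSelfAdjoint E) (hE2 : E * E = E) :
    LinearMap.ker ((E * P * (1 - E) : H →L[ℂ] H) : H →ₗ[ℂ] H) =
      LinearMap.ker (((1 - E) * P * (1 - E) : H →L[ℂ] H) : H →ₗ[ℂ] H) ⊔
        LinearMap.ker (((1 - E) * P * (1 - E) - 1 : H →L[ℂ] H) : H →ₗ[ℂ] H) := by
  set a : H →L[ℂ] H := E * P * (1 - E) with ha
  set y : H →L[ℂ] H := (1 - E) * P * (1 - E) with hy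
  have hFF : (1 - E) * (1 - E) = (1 - E : H →L[ℂ] H) := by
    have : (1 - E) * (1 - E) = 1 - E - E + E * E := by noncomm_ring
    rw [this, hE2]; abel
  have h1 : P * ((1 - E) * P) = P * P - P * (E * (E * P)) := by
    rw [← mul_assoc E E P, hE2]; noncomm_ring
  have hmid : P - P * ((1 - E) * P) = P * (E * (E * P)) := by
    rw [h1, hP2]; abel
  have key : y - y * y = ((1 - E) * P * E) * a := by
    calc y - y * y
        = (1 - E) * (P - P * ((1 - E) * ((1 - E) * P))) * (1 - E) := by
          rw [hy]; noncomm_ring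
      _ = (1 - E) * (P - P * ((1 - E) * P)) * (1 - E) := by
          rw [← mul_assoc (1 - E) (1 - E) P, hFF]
      _ = (1 - E) * (P * (E * (E * P))) * (1 - E) := by rw [hmid]
      _ = ((1 - E) * P * E) * a := by rw [ha]; noncomm_ring
  have hstar : ContinuousLinearMap.adjoint a = (1 - E) * P * E := by
    rw [← ContinuousLinearMap.star_eq_adjoint, ha]
    simp [star_mul, hP.star_eq, hE.star_eq, mul_assoc]
  have hker : LinearMap.ker (a : H →ₗ[ℂ] H) = LinearMap.ker ((y - y * y : H →L[ℂ] H) : H →ₗ[ℂ] H) := by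
    ext x
    simp only [LinearMap.mem_ker, ContinuousLinearMap.coe_coe]
    constructor
    · intro hx
      rw [key, ContinuousLinearMap.mul_apply, hx, map_zero]
    · intro hx
      have h0 : inner (𝕜 := ℂ) (a x) (a x) = 0 := by
        have := ContinuousLinearMap.adjoint_inner_right a x (a x)
        rw [hstar] at this
        rw [← this]
        have : ((1 - E) * P * E) (a x) = 0 := by
          have := congrArg (fun T : H →L[ℂ] H => T x) key
          simpa [ContinuousLinearMap.mul_apply, hx] using this.symm
        rw [this, inner_zero_right]
      exact inner_self_eq_zero.mp h0
  rw [hker]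
  apply le_antisymm
  · intro x hx
    simp only [LinearMap.mem_ker, ContinuousLinearMap.coe_coe,
      ContinuousLinearMap.sub_apply, ContinuousLinearMap.mul_apply] at hx
    have hx1 : (x - y x) ∈ LinearMap.ker (y : H →ₗ[ℂ] H) := by
      simp only [LinearMap.mem_ker, ContinuousLinearMap.coe_coe, map_sub]
      exact hx
    have hx2 : y x ∈ LinearMap.ker ((y - 1 : H →L[ℂ] H) : H →ₗ[ℂ] H) := by
      simp only [LinearMap.mem_ker, ContinuousLinearMap.coe_coe,
        ContinuousLinearMap.sub_apply, ContinuousLinearMap.one_apply]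
      exact sub_eq_zero.mpr (sub_eq_zero.mp hx).symm
    have : x = (x - y x) + y x := by abel
    rw [this]
    exact Submodule.add_mem_sup hx1 hx2
  · apply sup_le
    · intro x hx
      simp only [LinearMap.mem_ker, ContinuousLinearMap.coe_coe] at hx ⊢
      simp [ContinuousLinearMap.sub_apply, ContinuousLinearMap.mul_apply, hx]
    · intro x hx
      simp only [LinearMap.mem_ker, ContinuousLinearMap.coe_coe,
        ContinuousLinearMap.sub_apply, ContinuousLinearMap.one_apply] at hx
      have hyx : y x = x := sub_eq_zero.mp hx
      simp only [LinearMap.mem_ker, ContinuousLinearMap.coe_coe,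
        ContinuousLinearMap.sub_apply, ContinuousLinearMap.mul_apply, hyx, sub_self]
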